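/- Let 𝒜 ⊆ ℓ∞ be nonempty and let f : 𝒜 → ℝ be bounded below and satisfy lim_{T→∞} sup_{v∈B_T(u)} |f(x^T(u,v)) − f(u)| = 0 for every u ∈ 𝒜. Let g : 𝒜 → ℓ∞ be Uniformly Asymptotically Non-Anticipatory (UANA), suppose that for every u ∈ 𝒜 and every T̄ ∈ ℕ there exist T ≥ T̄ and v ∈ B_T(u) with limsup_{t→∞} g_t(x^T(u,v)) ≤ 0, and suppose that for every u ∈ 𝒜 the family {g(x^T(u,v)) : T ∈ ℕ, v ∈ B_T(u)} is uniformly bounded in ℓ∞. Then, with infima and suprema in the extended reals, sup_{Λ∈(ℓ∞)*₊} inf_{x∈𝒜} [f(x) + Λ(g(x))] = sup_{λ∈ℓ¹₊} inf_{x∈𝒜} [f(x) + ∑_t λ_t g_t(x)]. -/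

import Mathlib

open scoped ENNReal
open Filter

/-- The sequence `x^T(u,v)` equal to `u_t` for `t ≤ T` and to `v_t` for `t > T`,
as an element of `ℓ∞`. -/
noncomputable def splice (u v : lp (fun _ : ℕ => ℝ) ∞) (T : ℕ) : lp (fun _ : ℕ => ℝ) ∞ :=
  ⟨fun t => if t ≤ T then u t else v t, by
    apply memℓp_infty
    refine ⟨max ‖u‖ ‖v‖, ?_⟩
    rintro r ⟨t, rfl⟩
    dsimp only
    split_ifs
    · exact le_max_of_le_left (lp.norm_apply_le_norm ENNReal.top_ne_zero u t)
    · exact le_max_of_le_right (lp.norm_apply_le_norm ENNReal.top_ne_zero v t)⟩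

/-- Given `𝒜 ⊆ ℓ∞` and `u`, the set `B_T(u) = {v ∈ ℓ∞ : x^T(u,v) ∈ 𝒜}`. -/
def BT (A : Set (lp (fun _ : ℕ => ℝ) ∞)) (u : lp (fun _ : ℕ => ℝ) ∞) (T : ℕ) :
    Set (lp (fun _ : ℕ => ℝ) ∞) :=
  {v | splice u v T ∈ A}

/-- `g : 𝒜 → ℓ∞` is Uniformly Asymptotically Non-Anticipatory:
for every coordinate `t` and every `u ∈ 𝒜`,
`lim_{T→∞} sup_{v ∈ B_T(u)} |g_t(x^T(u,v)) − g_t(u)| = 0`. -/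
def UANA (A : Set (lp (fun _ : ℕ => ℝ) ∞))
    (g : lp (fun _ : ℕ => ℝ) ∞ → lp (fun _ : ℕ => ℝ) ∞) : Prop :=
  ∀ t : ℕ, ∀ u ∈ A, ∀ ε > (0 : ℝ), ∃ Tbar : ℕ, ∀ T ≥ Tbar, ∀ v ∈ BT A u T,
    |g (splice u v T) t - g u t| ≤ ε

lemma splice_apply (u v : lp (fun _ : ℕ => ℝ) ∞) (T t : ℕ) :
    splice u v T t = if t ≤ T then u t else v t := rfl

lemma splice_self (u : lp (fun _ : ℕ => ℝ) ∞) (T : ℕ) : splice u u T = u :=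
  lp.ext (funext fun t => by rw [splice_apply]; split_ifs <;> rfl)

noncomputable def truncE (z : lp (fun _ : ℕ => ℝ) ∞) (n : ℕ) : lp (fun _ : ℕ => ℝ) ∞ :=
  ⟨fun t => if t < n then z t else 0, by
    apply memℓp_infty
    refine ⟨‖z‖, ?_⟩
    rintro r ⟨t, rfl⟩
    dsimp only
    split_ifs
    · exact lp.norm_apply_le_norm ENNReal.top_ne_zero z t
    · rw [norm_zero]; exact norm_nonneg z⟩

lemma truncE_apply (z : lp (fun _ : ℕ => ℝ) ∞) (n t : ℕ) :
    truncE z n t = if t < n then z t else 0 := rfl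

lemma single_apply' (t s : ℕ) :
    (lp.single ∞ t (1:ℝ) : lp (fun _ : ℕ => ℝ) ∞) s = if s = t then 1 else 0 := by
  rcases eq_or_ne s t with rfl | h
  · simp [lp.single_apply_self]
  · simp [lp.single_apply_ne _ _ _ h, h]

lemma single_nonneg' (t s : ℕ) :
    0 ≤ (lp.single ∞ t (1:ℝ) : lp (fun _ : ℕ => ℝ) ∞) s := by
  rw [single_apply']; split_ifs <;> norm_num

lemma truncE_eq_sum (z : lp (fun _ : ℕ => ℝ) ∞) (n : ℕ) :
    truncE z n = ∑ t ∈ Finset.range n, z t • lp.single ∞ t (1:ℝ) := by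
  apply lp.ext
  funext s
  rw [lp.coeFn_sum, Finset.sum_apply]
  simp only [lp.coeFn_smul, Pi.smul_apply, smul_eq_mul, single_apply', mul_ite, mul_one,
    mul_zero, truncE_apply]
  rw [Finset.sum_ite_eq (Finset.range n) s]
  simp [Finset.mem_range]

lemma one_apply' (t : ℕ) : (1 : lp (fun _ : ℕ => ℝ) ∞) t = 1 := by
  rw [lp.infty_coeFn_one]; rfl

lemma ereal_le_coe_of_le_add (a : EReal) (r K : ℝ) (hK : 0 < K)
    (h : ∀ ε : ℝ, 0 < ε → a ≤ ((r + K * ε : ℝ) : EReal)) : a ≤ (r : EReal) := by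
  by_contra hc
  push_neg at hc
  obtain ⟨z, hz1, hz2⟩ := EReal.exists_between_coe_real hc
  have hz1' : r < z := by exact_mod_cast hz1
  have hε : 0 < (z - r) / K := div_pos (by linarith) hK
  have h2 := h _ hε
  have hzr : r + K * ((z - r) / K) = z := by field_simp; ring
  rw [hzr] at h2
  exact absurd (lt_of_lt_of_le hz2 h2) (lt_irrefl _)

set_option maxHeartbeats 1000000 in
/-- Let `𝒜 ⊆ ℓ∞` be nonempty, `f : 𝒜 → ℝ` bounded below with
`lim_{T→∞} sup_{v∈B_T(u)} |f(x^T(u,v)) − f(u)| = 0` for all `u ∈ 𝒜`, and let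
`g : 𝒜 → ℓ∞` be UANA, uniformly bounded along splices, and such that beyond every `T̄`
there is a splice whose constraint values have nonpositive limsup. Then
`sup_{Λ∈(ℓ∞)*₊} inf_{x∈𝒜} [f(x) + Λ(g(x))] = sup_{λ∈ℓ¹₊} inf_{x∈𝒜} [f(x) + ∑_t λ_t g_t(x)]`. -/
theorem stmt8 (A : Set (lp (fun _ : ℕ => ℝ) ∞)) (hA : A.Nonempty)
    (f : lp (fun _ : ℕ => ℝ) ∞ → ℝ)
    (M : ℝ) (hfbdd : ∀ x ∈ A, M ≤ f x)
    (hf : ∀ u ∈ A, ∀ ε > (0 : ℝ), ∃ Tbar : ℕ, ∀ T ≥ Tbar, ∀ v ∈ BT A u T,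
      |f (splice u v T) - f u| ≤ ε)
    (g : lp (fun _ : ℕ => ℝ) ∞ → lp (fun _ : ℕ => ℝ) ∞)
    (hUANA : UANA A g)
    (hfeas : ∀ u ∈ A, ∀ Tbar : ℕ, ∃ T ≥ Tbar, ∃ v ∈ BT A u T,
      Filter.limsup (fun t : ℕ => g (splice u v T) t) atTop ≤ 0)
    (hbdd : ∀ u ∈ A, ∃ C : ℝ, ∀ T : ℕ, ∀ v ∈ BT A u T, ‖g (splice u v T)‖ ≤ C) :
    (⨆ (Λ : lp (fun _ : ℕ => ℝ) ∞ →L[ℝ] ℝ)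
        (_ : ∀ y : lp (fun _ : ℕ => ℝ) ∞, (∀ t, 0 ≤ y t) → 0 ≤ Λ y),
        ⨅ x ∈ A, ((f x + Λ (g x) : ℝ) : EReal))
      = ⨆ (lam : lp (fun _ : ℕ => ℝ) 1) (_ : ∀ t, 0 ≤ lam t),
        ⨅ x ∈ A, ((f x + ∑' t, lam t * g x t : ℝ) : EReal) := by
  classical
  apply le_antisymm
  · -- hard direction
    refine iSup₂_le fun Λ hΛ => ?_
    have mono : ∀ y z : lp (fun _ : ℕ => ℝ) ∞, (∀ t, y t ≤ z t) → Λ y ≤ Λ z := by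
      intro y z h
      have h0 : 0 ≤ Λ (z - y) := hΛ _ (fun t => by
        rw [lp.coeFn_sub, Pi.sub_apply]; exact sub_nonneg.2 (h t))
      rw [map_sub] at h0; linarith
    set lam0 : ℕ → ℝ := fun t => Λ (lp.single ∞ t 1) with hlam0def
    have hlam0 : ∀ t, 0 ≤ lam0 t := fun t => hΛ _ (single_nonneg' t)
    have hL0 : 0 ≤ Λ 1 := hΛ _ (fun t => by rw [one_apply']; norm_num)
    have keyT : ∀ (z : lp (fun _ : ℕ => ℝ) ∞) (n : ℕ),
        Λ (truncE z n) = ∑ t ∈ Finset.range n, lam0 t * z t := by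
      intro z n
      rw [truncE_eq_sum, map_sum]
      refine Finset.sum_congr rfl fun t _ => ?_
      rw [map_smul, smul_eq_mul, mul_comm]
    have hpart : ∀ n, ∑ t ∈ Finset.range n, lam0 t ≤ Λ 1 := by
      intro n
      have h1 : Λ (truncE 1 n) = ∑ t ∈ Finset.range n, lam0 t := by
        rw [keyT]
        exact Finset.sum_congr rfl fun t _ => by rw [one_apply', mul_one]
      rw [← h1]
      refine mono _ _ (fun t => ?_)
      rw [truncE_apply]
      split_ifs
      · exact le_refl _
      · rw [one_apply']; norm_num
    have hsumlam : Summable lam0 := summable_of_sum_range_le hlam0 hpart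
    have hS0 : 0 ≤ ∑' t, lam0 t := tsum_nonneg hlam0
    have hsummul : ∀ y : lp (fun _ : ℕ => ℝ) ∞, Summable (fun t => lam0 t * y t) := by
      intro y
      refine Summable.of_norm_bounded (hsumlam.mul_right ‖y‖)
        (fun t => ?_)
      rw [norm_mul, Real.norm_eq_abs (lam0 t), abs_of_nonneg (hlam0 t)]
      exact mul_le_mul_of_nonneg_left (lp.norm_apply_le_norm ENNReal.top_ne_zero y t) (hlam0 t)
    have keyC : ∀ (y : lp (fun _ : ℕ => ℝ) ∞) (N₂ : ℕ) (ε : ℝ), 0 ≤ ε →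
        (∀ t, N₂ ≤ t → y t ≤ ε) →
        Λ y ≤ (∑ t ∈ Finset.range N₂, lam0 t * y t) + ε * Λ 1 := by
      intro y N₂ ε hε hy
      have hco : ∀ t, (truncE (y - ε • 1) N₂ + ε • (1 : lp (fun _ : ℕ => ℝ) ∞)) t
          = if t < N₂ then y t else ε := by
        intro t
        simp only [lp.coeFn_add, Pi.add_apply, truncE_apply, lp.coeFn_sub, Pi.sub_apply,
          lp.coeFn_smul, Pi.smul_apply, smul_eq_mul, one_apply', mul_one]
        split_ifs <;> ring
      have h1 : Λ y ≤ Λ (truncE (y - ε • 1) N₂ + ε • 1) := by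
        refine mono _ _ (fun t => ?_)
        rw [hco]
        split_ifs with h
        · exact le_refl _
        · exact hy t (le_of_not_gt h)
      have h2 : Λ (truncE (y - ε • 1) N₂ + ε • 1)
          = (∑ t ∈ Finset.range N₂, lam0 t * (y t - ε)) + ε * Λ 1 := by
        rw [map_add, map_smul, smul_eq_mul, keyT]
        congr 1
        refine Finset.sum_congr rfl fun t _ => ?_
        congr 1
        simp only [lp.coeFn_sub, Pi.sub_apply, lp.coeFn_smul, Pi.smul_apply, smul_eq_mul, one_apply', mul_one]
      have h3 : ∑ t ∈ Finset.range N₂, lam0 t * (y t - ε)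
          ≤ ∑ t ∈ Finset.range N₂, lam0 t * y t :=
        Finset.sum_le_sum fun t _ => by nlinarith [hlam0 t]
      linarith
    have hmem : Memℓp lam0 1 := by
      refine memℓp_gen ?_
      simp only [ENNReal.toReal_one, Real.rpow_one]
      have : (fun i => ‖lam0 i‖) = lam0 :=
        funext fun i => by rw [Real.norm_eq_abs, abs_of_nonneg (hlam0 i)]
      rw [this]; exact hsumlam
    refine le_trans ?_
      (le_iSup₂ (f := fun (lam : lp (fun _ : ℕ => ℝ) 1) (_ : ∀ t, 0 ≤ lam t) =>
        ⨅ x ∈ A, ((f x + ∑' t, lam t * g x t : ℝ) : EReal))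
        (⟨lam0, hmem⟩ : lp (fun _ : ℕ => ℝ) 1) (fun t => hlam0 t))
    refine le_iInf₂ fun x₀ hx₀ => ?_
    have hcoe : (∑' t, (⟨lam0, hmem⟩ : lp (fun _ : ℕ => ℝ) 1) t * g x₀ t)
        = ∑' t, lam0 t * g x₀ t := rfl
    rw [hcoe]
    obtain ⟨C, hC⟩ := hbdd x₀ hx₀
    have hx₀BT : ∀ T, x₀ ∈ BT A x₀ T := fun T => by
      show splice x₀ x₀ T ∈ A
      rw [splice_self]; exact hx₀
    have hgx₀ : ‖g x₀‖ ≤ C := by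
      have := hC 0 x₀ (hx₀BT 0); rwa [splice_self] at this
    have hC0 : 0 ≤ C := le_trans (norm_nonneg _) hgx₀
    have hgx₀t : ∀ t, |g x₀ t| ≤ C := fun t => by
      rw [← Real.norm_eq_abs]
      exact le_trans (lp.norm_apply_le_norm ENNReal.top_ne_zero (g x₀) t) hgx₀
    refine ereal_le_coe_of_le_add _ _ (1 + Λ 1 + (∑' t, lam0 t) + 3 * C) (by linarith) ?_
    intro ε hε
    obtain ⟨N₁, hN₁⟩ := Metric.tendsto_atTop.1 (tendsto_sum_nat_add lam0) ε hε
    have htail' : ∀ N, N₁ ≤ N → ∑' k, lam0 (k + N) ≤ ε := by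
      intro N hN
      have h := hN₁ N hN
      rw [Real.dist_eq, sub_zero] at h
      exact le_of_lt (lt_of_le_of_lt (le_abs_self _) h)
    choose Tb hTb using fun t => hUANA t x₀ hx₀ ε hε
    obtain ⟨Tf, hTf⟩ := hf x₀ hx₀ ε hε
    obtain ⟨T, hT, v, hv, hls⟩ := hfeas x₀ hx₀ (max Tf ((Finset.range (N₁+1)).sup Tb))
    have hwA : splice x₀ v T ∈ A := hv
    have hfw : |f (splice x₀ v T) - f x₀| ≤ ε :=
      hTf T (le_trans (le_max_left _ _) hT) v hv
    have hgw : ‖g (splice x₀ v T)‖ ≤ C := hC T v hv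
    have hgwt : ∀ t, |g (splice x₀ v T) t| ≤ C := fun t => by
      rw [← Real.norm_eq_abs]
      exact le_trans (lp.norm_apply_le_norm ENNReal.top_ne_zero _ t) hgw
    have hdsmall : ∀ t, t ≤ N₁ → |g (splice x₀ v T) t - g x₀ t| ≤ ε := by
      intro t ht
      refine hTb t T (le_trans (le_trans ?_ (le_max_right _ _)) hT) v hv
      exact Finset.le_sup (Finset.mem_range.2 (Nat.lt_succ_of_le ht))
    have hev : ∀ᶠ t in atTop, g (splice x₀ v T) t < ε :=
      eventually_lt_of_limsup_lt (lt_of_le_of_lt hls hε)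
        (isBoundedUnder_of ⟨C, fun t => (abs_le.1 (hgwt t)).2⟩)
    obtain ⟨N₂', hN₂'⟩ := eventually_atTop.1 hev
    have hyN₂ : ∀ t, max N₂' N₁ ≤ t → g (splice x₀ v T) t ≤ ε :=
      fun t ht => le_of_lt (hN₂' t (le_trans (le_max_left _ _) ht))
    -- claim A
    have hA1 := keyC (g (splice x₀ v T)) (max N₂' N₁) ε hε.le hyN₂
    have hsw : Summable (fun t => lam0 t * g (splice x₀ v T) t) := hsummul _
    have hsplit : (∑ t ∈ Finset.range (max N₂' N₁), lam0 t * g (splice x₀ v T) t)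
        + ∑' k, lam0 (k + max N₂' N₁) * g (splice x₀ v T) (k + max N₂' N₁)
        = ∑' t, lam0 t * g (splice x₀ v T) t := Summable.sum_add_tsum_nat_add _ hsw
    have htail_lam : Summable (fun k => lam0 (k + max N₂' N₁)) :=
      (summable_nat_add_iff (f := lam0) _).2 hsumlam
    have htail_w : Summable (fun k => lam0 (k + max N₂' N₁) * g (splice x₀ v T) (k + max N₂' N₁)) :=
      (summable_nat_add_iff (f := fun t => lam0 t * g (splice x₀ v T) t) _).2 hsw
    have htailw_lb : -(C * ε)
        ≤ ∑' k, lam0 (k + max N₂' N₁) * g (splice x₀ v T) (k + max N₂' N₁) := by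
      have h1 : ∑' k, (-(lam0 (k + max N₂' N₁) * C))
          ≤ ∑' k, lam0 (k + max N₂' N₁) * g (splice x₀ v T) (k + max N₂' N₁) := by
        refine Summable.tsum_le_tsum (fun k => ?_) ((htail_lam.mul_right C).neg) htail_w
        have h := (abs_le.1 (hgwt (k + max N₂' N₁))).1
        nlinarith [hlam0 (k + max N₂' N₁)]
      have h2 : ∑' k, (-(lam0 (k + max N₂' N₁) * C))
          = -((∑' k, lam0 (k + max N₂' N₁)) * C) := by
        rw [tsum_neg, tsum_mul_right]
      have h3 : (∑' k, lam0 (k + max N₂' N₁)) * C ≤ ε * C :=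
        mul_le_mul_of_nonneg_right (htail' _ (le_max_right _ _)) hC0
      have h4 : -(C * ε) = -(ε * C) := by ring
      linarith
    have hA2 : ∑ t ∈ Finset.range (max N₂' N₁), lam0 t * g (splice x₀ v T) t
        ≤ (∑' t, lam0 t * g (splice x₀ v T) t) + C * ε := by linarith
    -- claim B
    have hsx : Summable (fun t => lam0 t * g x₀ t) := hsummul _
    have heq : (fun t => lam0 t * (g (splice x₀ v T) t - g x₀ t))
        = fun t => lam0 t * g (splice x₀ v T) t - lam0 t * g x₀ t := funext fun t => by ring
    have hsd : Summable (fun t => lam0 t * (g (splice x₀ v T) t - g x₀ t)) := by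
      rw [heq]; exact hsw.sub hsx
    have hdiff_eq : ∑' t, lam0 t * (g (splice x₀ v T) t - g x₀ t)
        = (∑' t, lam0 t * g (splice x₀ v T) t) - ∑' t, lam0 t * g x₀ t := by
      rw [heq, Summable.tsum_sub hsw hsx]
    have hsd_shift : Summable (fun k => lam0 (k + (N₁+1)) *
        (g (splice x₀ v T) (k + (N₁+1)) - g x₀ (k + (N₁+1)))) :=
      (summable_nat_add_iff (f := fun t => lam0 t * (g (splice x₀ v T) t - g x₀ t)) _).2 hsd
    have hsplit2 : (∑ t ∈ Finset.range (N₁+1), lam0 t * (g (splice x₀ v T) t - g x₀ t))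
        + ∑' k, lam0 (k + (N₁+1)) * (g (splice x₀ v T) (k + (N₁+1)) - g x₀ (k + (N₁+1)))
        = ∑' t, lam0 t * (g (splice x₀ v T) t - g x₀ t) := Summable.sum_add_tsum_nat_add _ hsd
    have hhead : ∑ t ∈ Finset.range (N₁+1), lam0 t * (g (splice x₀ v T) t - g x₀ t)
        ≤ (∑' t, lam0 t) * ε := by
      have h1 : ∀ t ∈ Finset.range (N₁+1),
          lam0 t * (g (splice x₀ v T) t - g x₀ t) ≤ lam0 t * ε := by
        intro t ht
        have h2 := (abs_le.1 (hdsmall t (Nat.lt_succ_iff.1 (Finset.mem_range.1 ht)))).2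
        nlinarith [hlam0 t]
      calc ∑ t ∈ Finset.range (N₁+1), lam0 t * (g (splice x₀ v T) t - g x₀ t)
          ≤ ∑ t ∈ Finset.range (N₁+1), lam0 t * ε := Finset.sum_le_sum h1
        _ = (∑ t ∈ Finset.range (N₁+1), lam0 t) * ε := by rw [Finset.sum_mul]
        _ ≤ (∑' t, lam0 t) * ε :=
            mul_le_mul_of_nonneg_right (Summable.sum_le_tsum _ (fun t _ => hlam0 t) hsumlam) hε.le
    have htail2 : ∑' k, lam0 (k + (N₁+1)) *
        (g (splice x₀ v T) (k + (N₁+1)) - g x₀ (k + (N₁+1))) ≤ 2*C*ε := by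
      have hmaj : Summable (fun k => lam0 (k + (N₁+1)) * (2*C)) :=
        ((summable_nat_add_iff (N₁+1)).2 hsumlam).mul_right _
      have h1 : ∀ k, lam0 (k + (N₁+1)) *
          (g (splice x₀ v T) (k + (N₁+1)) - g x₀ (k + (N₁+1)))
          ≤ lam0 (k + (N₁+1)) * (2*C) := by
        intro k
        have ha := (abs_le.1 (hgwt (k + (N₁+1)))).2
        have hb := (abs_le.1 (hgx₀t (k + (N₁+1)))).1
        nlinarith [hlam0 (k + (N₁+1))]
      calc ∑' k, lam0 (k + (N₁+1)) *
            (g (splice x₀ v T) (k + (N₁+1)) - g x₀ (k + (N₁+1)))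
          ≤ ∑' k, lam0 (k + (N₁+1)) * (2*C) := Summable.tsum_le_tsum h1 hsd_shift hmaj
        _ = (∑' k, lam0 (k + (N₁+1))) * (2*C) := tsum_mul_right
        _ ≤ ε * (2*C) :=
            mul_le_mul_of_nonneg_right (htail' (N₁+1) (Nat.le_succ N₁)) (by linarith)
        _ = 2*C*ε := by ring
    have hB : ∑' t, lam0 t * g (splice x₀ v T) t
        ≤ (∑' t, lam0 t * g x₀ t) + ((∑' t, lam0 t) * ε + 2*C*ε) := by linarith
    have hfw' := (abs_le.1 hfw).2
    have hfinal : f (splice x₀ v T) + Λ (g (splice x₀ v T))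
        ≤ (f x₀ + ∑' t, lam0 t * g x₀ t) + (1 + Λ 1 + (∑' t, lam0 t) + 3 * C) * ε := by
      nlinarith
    calc (⨅ x ∈ A, ((f x + Λ (g x) : ℝ) : EReal))
        ≤ ((f (splice x₀ v T) + Λ (g (splice x₀ v T)) : ℝ) : EReal) := iInf₂_le _ hwA
      _ ≤ (((f x₀ + ∑' t, lam0 t * g x₀ t)
            + (1 + Λ 1 + (∑' t, lam0 t) + 3 * C) * ε : ℝ) : EReal) :=
          EReal.coe_le_coe_iff.2 hfinal
  · -- easy direction
    refine iSup₂_le fun lam hlam => ?_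
    have hsuml : Summable fun t => ‖lam t‖ := by
      have h := lp.memℓp lam
      rw [memℓp_gen_iff (by simp : (0:ℝ) < (1 : ℝ≥0∞).toReal)] at h
      simpa using h
    have hsmul : ∀ y : lp (fun _ : ℕ => ℝ) ∞, Summable fun t => lam t * y t := by
      intro y
      refine Summable.of_norm_bounded (hsuml.mul_right ‖y‖) fun t => ?_
      rw [norm_mul]
      exact mul_le_mul_of_nonneg_left (lp.norm_apply_le_norm ENNReal.top_ne_zero y t)
        (norm_nonneg _)
    set Λ₀ : lp (fun _ : ℕ => ℝ) ∞ →ₗ[ℝ] ℝ :=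
      { toFun := fun y => ∑' t, lam t * y t
        map_add' := by
          intro y z
          have h1 : ∀ t, lam t * (y + z) t = lam t * y t + lam t * z t := by
            intro t; rw [lp.coeFn_add, Pi.add_apply]; ring
          calc ∑' t, lam t * (y + z) t
              = ∑' t, (lam t * y t + lam t * z t) := tsum_congr h1
            _ = _ := Summable.tsum_add (hsmul y) (hsmul z)
        map_smul' := by
          intro c y
          have h1 : ∀ t, lam t * (c • y) t = c * (lam t * y t) := by
            intro t; rw [lp.coeFn_smul, Pi.smul_apply, smul_eq_mul]; ring
          simp only [RingHom.id_apply, smul_eq_mul]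
          calc ∑' t, lam t * (c • y) t
              = ∑' t, c * (lam t * y t) := tsum_congr h1
            _ = c * ∑' t, lam t * y t := tsum_mul_left } with hΛ₀def
    set Λc : lp (fun _ : ℕ => ℝ) ∞ →L[ℝ] ℝ :=
      LinearMap.mkContinuous Λ₀ (∑' t, ‖lam t‖) (fun y => by
        have hn : Summable fun t => ‖lam t * y t‖ := by
          refine Summable.of_nonneg_of_le (fun t => norm_nonneg _) (fun t => ?_)
            (hsuml.mul_right ‖y‖)
          rw [norm_mul]
          exact mul_le_mul_of_nonneg_left (lp.norm_apply_le_norm ENNReal.top_ne_zero y t)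
            (norm_nonneg _)
        calc ‖∑' t, lam t * y t‖ ≤ ∑' t, ‖lam t * y t‖ := norm_tsum_le_tsum_norm hn
          _ ≤ ∑' t, ‖lam t‖ * ‖y‖ := by
              refine Summable.tsum_le_tsum (fun t => ?_) hn (hsuml.mul_right _)
              rw [norm_mul]
              exact mul_le_mul_of_nonneg_left
                (lp.norm_apply_le_norm ENNReal.top_ne_zero y t) (norm_nonneg _)
          _ = (∑' t, ‖lam t‖) * ‖y‖ := tsum_mul_right) with hΛcdef
    have hpos : ∀ y : lp (fun _ : ℕ => ℝ) ∞, (∀ t, 0 ≤ y t) → 0 ≤ Λc y := by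
      intro y hy
      exact tsum_nonneg fun t => mul_nonneg (hlam t) (hy t)
    refine le_trans (le_of_eq ?_)
      (le_iSup₂ (f := fun (Λ : lp (fun _ : ℕ => ℝ) ∞ →L[ℝ] ℝ)
        (_ : ∀ y : lp (fun _ : ℕ => ℝ) ∞, (∀ t, 0 ≤ y t) → 0 ≤ Λ y) =>
        ⨅ x ∈ A, ((f x + Λ (g x) : ℝ) : EReal)) Λc hpos)
    refine iInf_congr fun x => iInf_congr fun _ => ?_
    have h : Λc (g x) = ∑' t, lam t * g x t := rfl
    rw [h]
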